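/- Let φ ∈ (0,1), ω = e^{2πiφ}, α ∈ ℂ, β = iα, and let θ_s ∈ ℂ satisfy θ_s² = ω/(ω²−3ω+1−i(ω²−1)). Define Ψ : ℤ → ℂ² by Ψ(x) = (−θ_s)^x · (α, (1−ω)α+ωβ) for x ≥ 1, Ψ(0) = (α, β), and Ψ(x) = θ_s^{−x} · ((ω−1)β+ωα, β) for x ≤ −1. Then |θ_s|² = 1/(3−2cos(2πφ)−2sin(2πφ)), and the measure μ(x) = |Ψ^L(x)|² + |Ψ^R(x)|² satisfies μ(0) = 2|α|² and μ(x) = 2|α|² · |θ_s|^{2|x|} · (2−cos(2πφ)−sin(2πφ)) for every x ≠ 0; in particular μ is symmetric with respect to the origin. -/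

import Mathlib

noncomputable section

/-- Left component of the explicit stationary state of the Wojcik model. -/
def wojcikPsiL (α β ω θ : ℂ) (x : ℤ) : ℂ :=
  if 1 ≤ x then (-θ) ^ x.toNat * α
  else if x = 0 then α
  else θ ^ (-x).toNat * ((ω - 1) * β + ω * α)

/-- Right component of the explicit stationary state of the Wojcik model. -/
def wojcikPsiR (α β ω θ : ℂ) (x : ℤ) : ℂ :=
  if 1 ≤ x then (-θ) ^ x.toNat * ((1 - ω) * α + ω * β)
  else if x = 0 then β
  else θ ^ (-x).toNat * β

/-- The measure at position `x` associated with the explicit stationary state. -/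
def wojcikMu (α β ω θ : ℂ) (x : ℤ) : ℝ :=
  ‖wojcikPsiL α β ω θ x‖ ^ 2 + ‖wojcikPsiR α β ω θ x‖ ^ 2

theorem wojcik_stationary_measure_beta_eq_i_alpha
    (φ : ℝ) (hφ : φ ∈ Set.Ioo (0 : ℝ) 1) (ω α β θ : ℂ)
    (hω : ω = Complex.exp (2 * (Real.pi : ℂ) * Complex.I * (φ : ℂ)))
    (hβ : β = Complex.I * α)
    (hθ : θ ^ 2 = ω / (ω ^ 2 - 3 * ω + 1 - Complex.I * (ω ^ 2 - 1))) :
    ‖θ‖ ^ 2 =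
      1 / (3 - 2 * Real.cos (2 * Real.pi * φ) - 2 * Real.sin (2 * Real.pi * φ)) ∧
    wojcikMu α β ω θ 0 = 2 * ‖α‖ ^ 2 ∧
    (∀ x : ℤ, x ≠ 0 →
      wojcikMu α β ω θ x =
        2 * ‖α‖ ^ 2 * ‖θ‖ ^ (2 * x.natAbs) *
          (2 - Real.cos (2 * Real.pi * φ) - Real.sin (2 * Real.pi * φ))) ∧
    (∀ x : ℤ, wojcikMu α β ω θ (-x) = wojcikMu α β ω θ x) := by
  set c : ℝ := Real.cos (2 * Real.pi * φ) with hc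
  set s : ℝ := Real.sin (2 * Real.pi * φ) with hs
  have hcs : c ^ 2 + s ^ 2 = 1 := by
    rw [hc, hs]; exact Real.cos_sq_add_sin_sq _
  -- ω in cartesian form
  have hωeq : ω = (c : ℂ) + (s : ℂ) * Complex.I := by
    have h1 : 2 * (Real.pi : ℂ) * Complex.I * (φ : ℂ)
        = ((2 * Real.pi * φ : ℝ) : ℂ) * Complex.I := by push_cast; ring
    rw [hω, h1, Complex.exp_mul_I, ← Complex.ofReal_cos, ← Complex.ofReal_sin]
  have hωre : ω.re = c := by rw [hωeq]; simp
  have hωim : ω.im = s := by rw [hωeq]; simp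
  have hK : 0 < 3 - 2 * c - 2 * s := by nlinarith [sq_nonneg (c - s), sq_nonneg (c + s)]
  -- |θ|^2 = 1/(3-2c-2s)
  have habsω : ‖ω‖ = 1 := by
    rw [hω]
    rw [Complex.norm_exp]
    simp
  have hDsq : ‖ω ^ 2 - 3 * ω + 1 - Complex.I * (ω ^ 2 - 1)‖ ^ 2
      = (3 - 2 * c - 2 * s) ^ 2 := by
    rw [Complex.sq_norm, Complex.normSq_apply]
    rw [show ω ^ 2 = ω * ω by ring]
    simp only [Complex.mul_re, Complex.mul_im, Complex.sub_re, Complex.sub_im,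
      Complex.add_re, Complex.add_im, Complex.one_re, Complex.one_im,
      Complex.I_re, Complex.I_im, Complex.re_ofNat, Complex.im_ofNat,
      hωre, hωim]
    linear_combination (2 * (c ^ 2 + s ^ 2) + 7 - 6 * c - 6 * s) * hcs
  have hD : ‖ω ^ 2 - 3 * ω + 1 - Complex.I * (ω ^ 2 - 1)‖
      = 3 - 2 * c - 2 * s := by
    have h0 : 0 ≤ ‖ω ^ 2 - 3 * ω + 1 - Complex.I * (ω ^ 2 - 1)‖ :=
      norm_nonneg _
    nlinarith [hDsq]
  have hθabs : ‖θ‖ ^ 2 = 1 / (3 - 2 * c - 2 * s) := by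
    have := congrArg (‖·‖) hθ
    rw [norm_pow, norm_div, habsω, hD] at this
    exact this
  -- key amplitude lemmas
  have hL1 : ∀ a : ℂ, ‖(1 - ω) * a + ω * (Complex.I * a)‖ ^ 2
      = (3 - 2 * c - 2 * s) * ‖a‖ ^ 2 := by
    intro a
    have : (1 - ω) * a + ω * (Complex.I * a) = (1 + (Complex.I - 1) * ω) * a := by ring
    rw [this, norm_mul, mul_pow]
    congr 1
    rw [Complex.sq_norm, Complex.normSq_apply]
    simp only [Complex.add_re, Complex.add_im, Complex.mul_re, Complex.mul_im,
      Complex.sub_re, Complex.sub_im, Complex.one_re, Complex.one_im,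
      Complex.I_re, Complex.I_im, hωre, hωim]
    nlinarith [hcs]
  have hL2 : ∀ a : ℂ, ‖(ω - 1) * (Complex.I * a) + ω * a‖ ^ 2
      = (3 - 2 * c - 2 * s) * ‖a‖ ^ 2 := by
    intro a
    have : (ω - 1) * (Complex.I * a) + ω * a = ((1 + Complex.I) * ω - Complex.I) * a := by
      ring
    rw [this, norm_mul, mul_pow]
    congr 1
    rw [Complex.sq_norm, Complex.normSq_apply]
    simp only [Complex.sub_re, Complex.sub_im, Complex.add_re, Complex.add_im,
      Complex.mul_re, Complex.mul_im, Complex.one_re, Complex.one_im,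
      Complex.I_re, Complex.I_im, hωre, hωim]
    nlinarith [hcs]
  have hμ0 : wojcikMu α β ω θ 0 = 2 * ‖α‖ ^ 2 := by
    simp only [wojcikMu, wojcikPsiL, wojcikPsiR]
    norm_num [hβ, norm_mul]
    ring
  have hmain : ∀ x : ℤ, x ≠ 0 →
      wojcikMu α β ω θ x =
        2 * ‖α‖ ^ 2 * ‖θ‖ ^ (2 * x.natAbs) * (2 - c - s) := by
    intro x hx
    rcases lt_or_gt_of_ne hx with hneg | hpos
    · -- x ≤ -1
      have h1 : ¬ (1 ≤ x) := by omega
      simp only [wojcikMu, wojcikPsiL, wojcikPsiR, if_neg h1, if_neg hx]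
      rw [norm_mul, norm_mul, norm_pow, mul_pow, mul_pow]
      have habsβ : ‖Complex.I * α‖ = ‖α‖ := by
        rw [norm_mul, Complex.norm_I, one_mul]
      rw [hβ, hL2 α, habsβ]
      have hn : (-x).toNat = x.natAbs := by omega
      rw [hn, ← pow_mul, Nat.mul_comm x.natAbs 2]
      ring
    · -- x ≥ 1
      have h1 : 1 ≤ x := hpos
      simp only [wojcikMu, wojcikPsiL, wojcikPsiR, if_pos h1]
      rw [norm_mul, norm_mul, norm_pow, norm_neg, mul_pow, mul_pow]
      rw [hβ, hL1 α]
      have hn : x.toNat = x.natAbs := by omega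
      rw [hn, ← pow_mul, Nat.mul_comm x.natAbs 2]
      ring
  refine ⟨hθabs, hμ0, hmain, ?_⟩
  intro x
  rcases eq_or_ne x 0 with rfl | hx
  · simp
  · rw [hmain x hx, hmain (-x) (neg_ne_zero.mpr hx), Int.natAbs_neg]
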